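/- Let L/K be a cyclic Galois extension of even degree n = 2m+2 with Galois group generated by σ, and for 1 ≤ i ≤ m+1 set A^i = {f_{b,σ^i} : b ∈ L} ⊆ Alt(L). Then for any integer k with 1 ≤ k ≤ m, every nonzero element of the nk-dimensional subspace A^1 ⊕ ⋯ ⊕ A^k of Alt(L) has rank at least n − 2k. -/

import Mathlib

variable {K L : Type*} [Field K] [Field L] [Algebra K L]

/-- The alternating bilinear form `f_{b,σ}(x,y) = Tr^L_K (b * (x * σ y - σ x * y))`,
where `Tr^L_K` is the trace form of the extension `L/K`. -/
noncomputable def galoisAltForm (b : L) (σ : L ≃ₐ[K] L) : (L →ₗ[K] L →ₗ[K] K) :=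
  LinearMap.mk₂ K (fun x y => Algebra.trace K L (b * (x * σ y - σ x * y)))
    (fun x x' y => by
      try dsimp only
      rw [show b * ((x + x') * σ y - σ (x + x') * y)
            = b * (x * σ y - σ x * y) + b * (x' * σ y - σ x' * y) by
          rw [map_add σ]; ring, map_add])
    (fun a x y => by
      try dsimp only
      rw [show b * ((a • x) * σ y - σ (a • x) * y)
            = a • (b * (x * σ y - σ x * y)) by
          rw [map_smul σ]
          simp only [smul_sub, smul_mul_assoc, mul_smul_comm, mul_sub], map_smul])
    (fun x y y' => by
      try dsimp only
      rw [show b * (x * σ (y + y') - σ x * (y + y'))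
            = b * (x * σ y - σ x * y) + b * (x * σ y' - σ x * y') by
          rw [map_add σ]; ring, map_add])
    (fun a x y => by
      try dsimp only
      rw [show b * (x * σ (a • y) - σ x * (a • y))
            = a • (b * (x * σ y - σ x * y)) by
          rw [map_smul σ]
          simp only [smul_sub, smul_mul_assoc, mul_smul_comm, mul_sub], map_smul])

/-- `b ↦ f_{b,σ}` as a `K`-linear map. -/
noncomputable def galoisAltFormL (σ : L ≃ₐ[K] L) : L →ₗ[K] (L →ₗ[K] L →ₗ[K] K) where
  toFun b := galoisAltForm b σ
  map_add' b b' := by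
    ext x y
    simp only [galoisAltForm, LinearMap.mk₂_apply, LinearMap.add_apply]
    rw [← map_add, add_mul]
  map_smul' a b := by
    ext x y
    simp only [galoisAltForm, LinearMap.mk₂_apply, LinearMap.smul_apply, RingHom.id_apply]
    rw [← map_smul, smul_mul_assoc]

/-- The rank of a bilinear form on `L`: `dim_K L` minus the dimension of its radical
`{x : L | ∀ y, f x y = 0}` (which is the kernel of `f` viewed as a map `L →ₗ[K] (L →ₗ[K] K)`). -/
noncomputable def formRank (f : (L →ₗ[K] L →ₗ[K] K)) : ℕ :=
  Module.finrank K L - Module.finrank K (LinearMap.ker f)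

/-- The space `Alt(L)` of all alternating `K`-bilinear forms on `L`. -/
def altSubspace (K L : Type*) [Field K] [Field L] [Algebra K L] :
    Submodule K (L →ₗ[K] L →ₗ[K] K) where
  carrier := {f | ∀ x : L, f x x = 0}
  add_mem' hf hg x := by simp [hf x, hg x]
  zero_mem' x := rfl
  smul_mem' a f hf x := by simp [hf x]

/-- for a cyclic extension of even degree `n = 2m+2` with Galois group
generated by `σ`, and `Aⁱ = {f_{b,σⁱ} : b ∈ L}`, for `1 ≤ k ≤ m` the subspace
`A¹ ⊕ ⋯ ⊕ Aᵏ` has dimension `nk` and all its nonzero elements have rank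
at least `n − 2k`. -/


lemma trace_algEquiv_apply' [FiniteDimensional K L] [IsGalois K L] (τ : L ≃ₐ[K] L) (x : L) :
    Algebra.trace K L (τ x) = Algebra.trace K L x := by
  apply (algebraMap K L).injective
  rw [trace_eq_sum_automorphisms, trace_eq_sum_automorphisms]
  exact Fintype.sum_equiv (Equiv.mulRight τ) _ _ (fun g => by
    simp [AlgEquiv.mul_apply])

lemma fixed_bot' [FiniteDimensional K L] [IsGalois K L] (σ : L ≃ₐ[K] L)
    (hgen : ∀ τ : L ≃ₐ[K] L, τ ∈ Subgroup.zpowers σ) (x : L) (hx : σ x = x) :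
    ∃ a : K, algebraMap K L a = x := by
  have hpow : ∀ nn : ℕ, (σ ^ nn) x = x := by
    intro nn
    induction nn with
    | zero => simp
    | succ p ih => rw [pow_succ, AlgEquiv.mul_apply, hx, ih]
  have hz : ∀ τ : L ≃ₐ[K] L, τ x = x := by
    intro τ
    obtain ⟨z, rfl⟩ := Subgroup.mem_zpowers_iff.mp (hgen τ)
    cases z with
    | ofNat nn => rw [Int.ofNat_eq_coe, zpow_natCast]; exact hpow nn
    | negSucc nn =>
        rw [zpow_negSucc]
        apply (σ ^ (nn + 1)).injective
        rw [← AlgEquiv.mul_apply, mul_inv_cancel, AlgEquiv.one_apply, hpow]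
  have hbot : x ∈ (⊥ : IntermediateField K L) := by
    rw [← IsGalois.fixedField_fixingSubgroup (⊥ : IntermediateField K L)]
    intro g
    exact hz g.1
  rwa [IntermediateField.mem_bot] at hbot


lemma moore' (σ : L ≃ₐ[K] L)
    (hfix : ∀ x : L, σ x = x → ∃ a : K, algebraMap K L a = x) :
    ∀ (r : ℕ) (u : Fin r → L), LinearIndependent K u →
      LinearIndependent L (fun i : Fin r => fun j : Fin r => (σ ^ (j : ℕ)) (u i)) := by
  intro r
  induction r with
  | zero => intro u _; exact linearIndependent_empty_type
  | succ r IH =>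
    intro u hu
    rw [Fintype.linearIndependent_iff]
    intro lam hlam
    have hrel : ∀ j : Fin (r+1), ∑ i, lam i * (σ ^ (j:ℕ)) (u i) = 0 := by
      intro j
      have := congrFun hlam j
      simpa [Finset.sum_apply, Pi.smul_apply, smul_eq_mul] using this
    have hshift : ∀ j : Fin (r+1), ∑ i, σ (lam i) * (σ ^ ((j:ℕ)+1)) (u i) = 0 := by
      intro j
      have h := congrArg σ (hrel j)
      rw [map_sum, map_zero] at h
      rw [← h]
      apply Finset.sum_congr rfl
      intro i _
      rw [map_mul, pow_succ', AlgEquiv.mul_apply]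
    set lst := lam (Fin.last r) with hlst_def
    set mu : Fin (r+1) → L := fun i => lam i * σ lst - σ (lam i) * lst with hmu_def
    -- combined relation for exponents 1..r
    have hmurel : ∀ j : Fin r, ∑ i : Fin (r+1), mu i * (σ ^ ((j:ℕ)+1)) (u i) = 0 := by
      intro j
      have h1 := hrel j.succ
      have h2 := hshift j.castSucc
      rw [Fin.val_succ] at h1
      rw [Fin.coe_castSucc] at h2
      calc ∑ i : Fin (r+1), mu i * (σ ^ ((j:ℕ)+1)) (u i)
          = σ lst * (∑ i, lam i * (σ ^ ((j:ℕ)+1)) (u i))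
            - lst * (∑ i, σ (lam i) * (σ ^ ((j:ℕ)+1)) (u i)) := by
            rw [Finset.mul_sum, Finset.mul_sum, ← Finset.sum_sub_distrib]
            apply Finset.sum_congr rfl
            intro i _
            simp only [hmu_def, sub_mul]
            ring
        _ = 0 := by rw [h1, h2, mul_zero, mul_zero, sub_zero]
    have hmulast : mu (Fin.last r) = 0 := by simp only [hmu_def, ← hlst_def]; ring
    -- apply IH to w = σ ∘ u ∘ castSucc
    set w : Fin r → L := fun i => σ (u i.castSucc) with hw_def
    have huc : LinearIndependent K (fun i : Fin r => u i.castSucc) :=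
      hu.comp Fin.castSucc (Fin.castSucc_injective r)
    have hw : LinearIndependent K w := by
      have := huc.map' σ.toLinearMap (LinearMap.ker_eq_bot.mpr σ.injective)
      exact this
    have hmuzero : ∀ i : Fin r, mu i.castSucc = 0 := by
      have hIH := Fintype.linearIndependent_iff.mp (IH w hw) (fun i => mu i.castSucc)
      apply hIH
      funext j
      simp only [Finset.sum_apply, Pi.smul_apply, smul_eq_mul, Pi.zero_apply]
      have : ∀ i : Fin r, (σ ^ (j:ℕ)) (w i) = (σ ^ ((j:ℕ)+1)) (u i.castSucc) := by
        intro i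
        rw [hw_def, pow_succ, AlgEquiv.mul_apply]
      rw [Finset.sum_congr rfl (fun i _ => by rw [this i])]
      have := hmurel j
      rw [Fin.sum_univ_castSucc] at this
      rw [hmulast, zero_mul, add_zero] at this
      exact this
    have hmuall : ∀ i : Fin (r+1), mu i = 0 := by
      intro i
      rcases Fin.eq_castSucc_or_eq_last i with ⟨j, rfl⟩ | rfl
      · exact hmuzero j
      · exact hmulast
    by_cases hlst0 : lst = 0
    · -- restrict relation and use IH on u ∘ castSucc
      have hzero : ∀ i : Fin r, lam i.castSucc = 0 := by
        have hIH := Fintype.linearIndependent_iff.mp (IH _ huc) (fun i => lam i.castSucc)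
        apply hIH
        funext j
        simp only [Finset.sum_apply, Pi.smul_apply, smul_eq_mul, Pi.zero_apply]
        have := hrel j.castSucc
        rw [Fin.sum_univ_castSucc] at this
        rw [← hlst_def, hlst0, zero_mul, add_zero, Fin.coe_castSucc] at this
        exact this
      intro i
      rcases Fin.eq_castSucc_or_eq_last i with ⟨j, rfl⟩ | rfl
      · exact hzero j
      · exact hlst0
    · -- contradiction case
      exfalso
      have hfixq : ∀ i : Fin (r+1), σ (lam i * lst⁻¹) = lam i * lst⁻¹ := by
        intro i
        have h := hmuall i
        rw [hmu_def] at h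
        have h' : lam i * σ lst = σ (lam i) * lst := sub_eq_zero.mp h
        rw [map_mul, map_inv₀]
        have hσlst : σ lst ≠ 0 := fun hc => hlst0 (by
          apply σ.injective; rw [hc, map_zero])
        field_simp
        linear_combination -h'
      choose a ha using fun i => hfix _ (hfixq i)
      have hsum0 : ∑ i, a i • u i = 0 := by
        have h0 := hrel 0
        simp only [Fin.val_zero, pow_zero, AlgEquiv.one_apply] at h0
        have : ∑ i, (lam i * lst⁻¹) * u i = 0 := by
          have : ∑ i, (lam i * lst⁻¹) * u i = (∑ i, lam i * u i) * lst⁻¹ := by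
            rw [Finset.sum_mul]
            apply Finset.sum_congr rfl
            intro i _; ring
          rw [this, h0, zero_mul]
        rw [← this]
        apply Finset.sum_congr rfl
        intro i _
        rw [Algebra.smul_def, ha i]
      have hall := Fintype.linearIndependent_iff.mp hu a hsum0
      have hlast : algebraMap K L (a (Fin.last r)) = 1 := by
        rw [ha, ← hlst_def, mul_inv_cancel₀ hlst0]
      rw [hall (Fin.last r), map_zero] at hlast
      exact zero_ne_one hlast

lemma ker_bound' [FiniteDimensional K L] (σ : L ≃ₐ[K] L)
    (hfix : ∀ x : L, σ x = x → ∃ a : K, algebraMap K L a = x)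
    (d : ℕ) (c : Fin (d+1) → L) (hc : c ≠ 0) :
    Module.finrank K
      (LinearMap.ker (∑ j : Fin (d+1), c j • ((σ ^ (j:ℕ)).toLinearMap : L →ₗ[K] L))) ≤ d := by
  classical
  set T : L →ₗ[K] L := ∑ j : Fin (d+1), c j • ((σ ^ (j:ℕ)).toLinearMap : L →ₗ[K] L) with hT_def
  have hTapp : ∀ x : L, T x = ∑ j : Fin (d+1), c j * (σ ^ (j:ℕ)) x := by
    intro x
    rw [hT_def, LinearMap.sum_apply]
    apply Finset.sum_congr rfl
    intro j _
    rw [LinearMap.smul_apply, AlgEquiv.toLinearMap_apply, smul_eq_mul]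
  by_contra hcon
  push_neg at hcon
  obtain ⟨u', hu'⟩ := exists_linearIndependent_of_le_finrank (n := d+1) hcon
  set u : Fin (d+1) → L := fun i => (u' i : L) with hu_def
  have hu : LinearIndependent K u :=
    hu'.map' (LinearMap.ker T).subtype (Submodule.ker_subtype _)
  have hmoore := moore' σ hfix (d+1) u hu
  set φ : (Fin (d+1) → L) →ₗ[L] L := ∑ j : Fin (d+1), c j • LinearMap.proj j with hφ_def
  have hφapp : ∀ v : Fin (d+1) → L, φ v = ∑ j, c j * v j := by
    intro v
    rw [hφ_def, LinearMap.sum_apply]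
    apply Finset.sum_congr rfl
    intro j _
    rw [LinearMap.smul_apply, LinearMap.proj_apply, smul_eq_mul]
  have hφv : ∀ i, (fun j : Fin (d+1) => (σ ^ (j:ℕ)) (u i)) ∈ LinearMap.ker φ := by
    intro i
    rw [LinearMap.mem_ker, hφapp, ← hTapp]
    exact (u' i).2
  have hφne : φ ≠ 0 := by
    obtain ⟨j0, hj0⟩ := Function.ne_iff.mp hc
    intro h0
    apply hj0
    have := congrArg (fun ψ => ψ (Pi.single j0 (1:L))) h0
    simp only [LinearMap.zero_apply] at this
    rw [hφapp] at this
    rw [Finset.sum_eq_single j0] at this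
    · rwa [Pi.single_eq_same, mul_one] at this
    · intro j _ hj; rw [Pi.single_eq_of_ne hj, mul_zero]
    · intro h; exact absurd (Finset.mem_univ _) h
  have hkerφ : Module.finrank L (LinearMap.ker φ) ≤ d := by
    have hrn := LinearMap.finrank_range_add_finrank_ker φ
    rw [Module.finrank_fin_fun] at hrn
    have hrange : Module.finrank L (LinearMap.range φ) ≠ 0 := by
      intro h
      exact hφne (LinearMap.range_eq_bot.mp (Submodule.finrank_eq_zero.mp h))
    omega
  set v' : Fin (d+1) → LinearMap.ker φ := fun i => ⟨_, hφv i⟩ with hv'_def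
  have hv' : LinearIndependent L v' :=
    LinearIndependent.of_comp (LinearMap.ker φ).subtype hmoore
  have := hv'.fintype_card_le_finrank
  rw [Fintype.card_fin] at this
  omega

lemma sum_ite_fin' {M : Type*} [AddCommMonoid M] {r : ℕ} (e : ℕ) (he : e < r) (v : Fin r → M) :
    (∑ j : Fin r, if (j:ℕ) = e then v j else 0) = v ⟨e, he⟩ := by
  rw [Finset.sum_eq_single (⟨e, he⟩ : Fin r)]
  · simp
  · intro j _ hj
    exact if_neg (fun h => hj (Fin.ext h))
  · intro h; exact absurd (Finset.mem_univ _) h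

set_option maxHeartbeats 1000000 in
theorem statement16 [FiniteDimensional K L] [IsGalois K L]
    (n m : ℕ) (hn : Module.finrank K L = n) (hnm : n = 2 * m + 2)
    (σ : L ≃ₐ[K] L) (hgen : ∀ τ : L ≃ₐ[K] L, τ ∈ Subgroup.zpowers σ)
    (k : ℕ) (hk1 : 1 ≤ k) (hkm : k ≤ m) :
    Module.finrank K
        ↥(⨆ i : Fin k, LinearMap.range (galoisAltFormL (σ ^ ((i : ℕ) + 1)))) = n * k ∧
    ∀ f ∈ (⨆ i : Fin k, LinearMap.range (galoisAltFormL (σ ^ ((i : ℕ) + 1)))),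
      f ≠ 0 → n - 2 * k ≤ formRank f := by
  classical
  have hkm' : 2 * k + 1 ≤ n := by omega
  -- order of σ is n
  have hcard : Nat.card (L ≃ₐ[K] L) = n := by
    rw [IsGalois.card_aut_eq_finrank, hn]
  have htop : Subgroup.zpowers σ = ⊤ := by
    ext τ; simp [hgen τ]
  have horder : orderOf σ = n := by
    rw [← Nat.card_zpowers, htop, Subgroup.card_top, hcard]
  have hσn : σ ^ n = 1 := by rw [← horder]; exact pow_orderOf_eq_one σ
  have hpowinj : ∀ a b : ℕ, a < n → b < n → σ ^ a = σ ^ b → a = b := by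
    intro a b ha hb hab
    exact pow_injOn_Iio_orderOf (by simpa [horder] using ha) (by simpa [horder] using hb) hab
  have hpp : ∀ (a b : ℕ) (z : L), (σ ^ a) ((σ ^ b) z) = (σ ^ (a + b)) z := by
    intro a b z; rw [pow_add, AlgEquiv.mul_apply]
  have hn1 : ∀ z : L, (σ ^ n) z = z := by
    intro z; rw [hσn, AlgEquiv.one_apply]
  have hred : ∀ (a : ℕ) (z : L), (σ ^ (n + a)) z = (σ ^ a) z := by
    intro a z; rw [pow_add, AlgEquiv.mul_apply, hσn, AlgEquiv.one_apply]
  have hfix := fixed_bot' σ hgen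
  -- the combined linear map
  set Φ : (Fin k → L) →ₗ[K] (L →ₗ[K] L →ₗ[K] K) :=
    ∑ i : Fin k, (galoisAltFormL (σ ^ ((i:ℕ)+1))).comp (LinearMap.proj i) with hΦ_def
  have hΦapp : ∀ b : Fin k → L,
      Φ b = ∑ i : Fin k, galoisAltFormL (σ ^ ((i:ℕ)+1)) (b i) := by
    intro b
    rw [hΦ_def, LinearMap.sum_apply]
    apply Finset.sum_congr rfl
    intro i _
    rw [LinearMap.comp_apply, LinearMap.proj_apply]
  -- the coefficient vector and the semilinear operator
  set c : (Fin k → L) → Fin (2*k+1) → L := fun b j =>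
    (∑ i : Fin k, if (j:ℕ) = k - (i:ℕ) - 1 then (σ ^ (k - (i:ℕ) - 1)) (b i) else 0)
    - (∑ i : Fin k, if (j:ℕ) = k + (i:ℕ) + 1 then (σ ^ k) (b i) else 0) with hc_def
  set Tl : (Fin k → L) → (L →ₗ[K] L) := fun b =>
    ∑ j : Fin (2*k+1), c b j • ((σ ^ (j:ℕ)).toLinearMap : L →ₗ[K] L) with hTl_def
  have hTlc : ∀ (b : Fin k → L) (x : L),
      Tl b x = ∑ j : Fin (2*k+1), c b j * (σ ^ (j:ℕ)) x := by
    intro b x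
    rw [hTl_def]
    rw [LinearMap.sum_apply]
    apply Finset.sum_congr rfl
    intro j _
    rw [LinearMap.smul_apply, AlgEquiv.toLinearMap_apply, smul_eq_mul]
  have hTlapp : ∀ (b : Fin k → L) (x : L), Tl b x
      = ∑ i : Fin k, ((σ ^ (k - (i:ℕ) - 1)) (b i * x)
          - (σ ^ k) (b i) * (σ ^ (k + (i:ℕ) + 1)) x) := by
    intro b x
    rw [hTlc]
    simp only [hc_def, sub_mul, Finset.sum_mul, ite_mul, zero_mul]
    have hA : ∑ j : Fin (2*k+1), ∑ i : Fin k,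
        (if (j:ℕ) = k - (i:ℕ) - 1 then (σ ^ (k - (i:ℕ) - 1)) (b i) * (σ ^ (j:ℕ)) x else 0)
        = ∑ i : Fin k, (σ ^ (k - (i:ℕ) - 1)) (b i * x) := by
      rw [Finset.sum_comm]
      apply Finset.sum_congr rfl
      intro i _
      rw [sum_ite_fin' (k - (i:ℕ) - 1) (by omega)
        (fun j => (σ ^ (k - (i:ℕ) - 1)) (b i) * (σ ^ (j:ℕ)) x)]
      rw [map_mul]
    have hB : ∑ j : Fin (2*k+1), ∑ i : Fin k,
        (if (j:ℕ) = k + (i:ℕ) + 1 then (σ ^ k) (b i) * (σ ^ (j:ℕ)) x else 0)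
        = ∑ i : Fin k, (σ ^ k) (b i) * (σ ^ (k + (i:ℕ) + 1)) x := by
      rw [Finset.sum_comm]
      apply Finset.sum_congr rfl
      intro i _
      have hi : (i:ℕ) < k := i.isLt
      rw [sum_ite_fin' (k + (i:ℕ) + 1) (by omega)
        (fun j => (σ ^ k) (b i) * (σ ^ (j:ℕ)) x)]
    rw [Finset.sum_sub_distrib, hA, hB, ← Finset.sum_sub_distrib]
  -- evaluation of the coefficients at the upper indices
  have hceval : ∀ (b : Fin k → L) (i : Fin k) (j : Fin (2*k+1)),
      (j:ℕ) = k + (i:ℕ) + 1 → c b j = -((σ ^ k) (b i)) := by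
    intro b i j hj
    simp only [hc_def]
    have h1 : (∑ i' : Fin k, if (j:ℕ)
        = k - (i':ℕ) - 1 then (σ ^ (k - (i':ℕ) - 1)) (b i') else 0) = 0 := by
      apply Finset.sum_eq_zero
      intro i' _
      exact if_neg (fun h => by omega)
    have h2 : (∑ i' : Fin k, if (j:ℕ)
        = k + (i':ℕ) + 1 then (σ ^ k) (b i') else 0) = (σ ^ k) (b i) := by
      rw [Finset.sum_eq_single i]
      · rw [if_pos hj]
      · intro i' _ hi'
        exact if_neg (fun h => hi' (Fin.ext (by omega)))
      · intro h; exact absurd (Finset.mem_univ _) h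
    rw [h1, h2, zero_sub]
  -- the trace identity
  have hΦtr : ∀ (b : Fin k → L) (x y : L),
      Φ b x y = Algebra.trace K L ((σ ^ (n - k)) (Tl b x) * y) := by
    intro b x y
    rw [hΦapp, hTlapp]
    have hL : (∑ i : Fin k, galoisAltFormL (σ ^ ((i:ℕ)+1)) (b i)) x y
        = ∑ i : Fin k, Algebra.trace K L
            (b i * (x * (σ ^ ((i:ℕ)+1)) y - (σ ^ ((i:ℕ)+1)) x * y)) := by
      rw [LinearMap.sum_apply, LinearMap.sum_apply]
      apply Finset.sum_congr rfl
      intro i _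
      rfl
    rw [hL, map_sum (σ ^ (n - k)), Finset.sum_mul, map_sum (Algebra.trace K L)]
    apply Finset.sum_congr rfl
    intro i _
    have hi : (i:ℕ) < k := i.isLt
    rw [mul_sub, map_sub, map_sub (σ ^ (n - k)), sub_mul, map_sub (Algebra.trace K L)]
    congr 1
    · -- trace (b i * (x * σ^{i+1} y)) = trace (σ^{n-k}(σ^{k-i-1}(b i * x)) * y)
      rw [hpp, show (n - k) + (k - (i:ℕ) - 1) = n - ((i:ℕ) + 1) by omega]
      rw [← trace_algEquiv_apply' (σ ^ ((i:ℕ)+1)) ((σ ^ (n - ((i:ℕ)+1))) (b i * x) * y)]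
      rw [map_mul (σ ^ ((i:ℕ)+1)), hpp, show (i:ℕ) + 1 + (n - ((i:ℕ)+1)) = n by omega, hn1]
      congr 1
      ring
    · rw [map_mul (σ ^ (n - k)), hpp, hpp, show (n - k) + k = n by omega,
        show (n - k) + (k + (i:ℕ) + 1) = n + ((i:ℕ) + 1) by omega, hn1, hred]
      congr 1
      ring
  -- kernel identification
  have hker : ∀ b : Fin k → L, LinearMap.ker (Φ b) = LinearMap.ker (Tl b) := by
    intro b
    ext x
    simp only [LinearMap.mem_ker]
    constructor
    · intro hx
      have h0 : ∀ y, Algebra.trace K L ((σ ^ (n - k)) (Tl b x) * y) = 0 := by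
        intro y
        rw [← hΦtr, hx, LinearMap.zero_apply]
      have hz := (traceForm_nondegenerate K L).1 ((σ ^ (n - k)) (Tl b x))
        (fun y => by rw [Algebra.traceForm_apply]; exact h0 y)
      apply (σ ^ (n - k)).injective
      rw [hz, map_zero]
    · intro hx
      ext y
      rw [hΦtr, hx, map_zero, zero_mul, map_zero, LinearMap.zero_apply]
  -- injectivity
  have hTlinj : ∀ b : Fin k → L, Tl b = 0 → b = 0 := by
    intro b hb
    set e : Fin (2*k+1) → (L →* L) :=
      fun j => ((σ ^ (j:ℕ)).toAlgHom.toRingHom.toMonoidHom) with he_def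
    have hli : LinearIndependent L (fun j : Fin (2*k+1) => ((e j : L → L))) := by
      refine (linearIndependent_monoidHom L L).comp e ?_
      intro a b' hab
      apply Fin.ext
      have ha : (a:ℕ) < n := by have := a.isLt; omega
      have hb' : (b':ℕ) < n := by have := b'.isLt; omega
      refine hpowinj a b' ha hb' ?_
      apply AlgEquiv.ext
      intro x
      exact DFunLike.congr_fun hab x
    have hsum : ∑ j : Fin (2*k+1), c b j • ((e j : L → L)) = 0 := by
      funext x
      simp only [Finset.sum_apply, Pi.smul_apply, smul_eq_mul, Pi.zero_apply]
      have hTx : Tl b x = 0 := by rw [hb, LinearMap.zero_apply]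
      rw [hTlc] at hTx
      exact hTx
    have hc0 := Fintype.linearIndependent_iff.mp hli (c b) hsum
    funext i
    have h := hc0 ⟨k + (i:ℕ) + 1, by omega⟩
    rw [hceval b i ⟨k + (i:ℕ) + 1, by omega⟩ rfl] at h
    have h0 : (σ ^ k) (b i) = 0 := neg_eq_zero.mp h
    apply (σ ^ k).injective
    rw [Pi.zero_apply, map_zero]
    exact h0
  have hΦinj : Function.Injective Φ := by
    refine (injective_iff_map_eq_zero Φ).mpr ?_
    exact ((fun b hb => by
      apply hTlinj
      apply LinearMap.ext
      intro x
      have hx : x ∈ LinearMap.ker (Φ b) := by rw [LinearMap.mem_ker, hb]; rfl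
      rw [hker] at hx
      simpa using hx))
  -- range identification
  have hrange : (⨆ i : Fin k, LinearMap.range (galoisAltFormL (σ ^ ((i:ℕ)+1))))
      = LinearMap.range Φ := by
    apply le_antisymm
    · apply iSup_le
      intro i
      rintro f ⟨b0, rfl⟩
      refine ⟨Pi.single i b0, ?_⟩
      rw [hΦapp, Finset.sum_eq_single i]
      · rw [Pi.single_eq_same]
      · intro j _ hj
        rw [Pi.single_eq_of_ne hj, map_zero]
      · intro h; exact absurd (Finset.mem_univ _) h
    · rintro f ⟨b, rfl⟩
      rw [hΦapp]
      apply Submodule.sum_mem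
      intro i _
      exact Submodule.mem_iSup_of_mem i ⟨b i, rfl⟩
  constructor
  · rw [hrange, LinearMap.finrank_range_of_inj hΦinj]
    rw [Module.finrank_pi_fintype, Finset.sum_congr rfl (fun i _ => hn)]
    simp [mul_comm]
  · intro f hf hfne
    rw [hrange] at hf
    obtain ⟨b, rfl⟩ := hf
    have hb : b ≠ 0 := fun h => hfne (by rw [h, map_zero])
    obtain ⟨i0, hi0⟩ := Function.ne_iff.mp hb
    have hcne : c b ≠ 0 := by
      intro h
      apply hi0
      have h' := congrFun h ⟨k + (i0:ℕ) + 1, by omega⟩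
      rw [hceval b i0 ⟨k + (i0:ℕ) + 1, by omega⟩ rfl] at h'
      have h0 : (σ ^ k) (b i0) = 0 := neg_eq_zero.mp (by rw [h']; rfl)
      apply (σ ^ k).injective
      rw [Pi.zero_apply, map_zero]
      exact h0
    have hkb : Module.finrank K (LinearMap.ker (Tl b)) ≤ 2 * k := by
      have := ker_bound' σ hfix (2*k) (c b) hcne
      rw [hTl_def]
      exact this
    unfold formRank
    rw [hn, hker b]
    omega
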